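/- Let H be a real symmetric d×d matrix and g ∈ ℝ^d a nonzero vector such that every eigenvalue of H is g-relevant. Then H is positive semidefinite if and only if ⟨z, Hz⟩ ≥ 0 for every z in the full Krylov space K(H,g) = span{H^i g : i ≥ 0}. -/

import Mathlib

open Matrix Polynomial

/-- The Krylov subspace of degree `t`: span of `g, Hg, …, H^{t-1} g`. -/
noncomputable def Krylov {d : ℕ} (H : Matrix (Fin d) (Fin d) ℝ) (g : Fin d → ℝ) (t : ℕ) :
    Submodule ℝ (Fin d → ℝ) :=
  Submodule.span ℝ ((fun i : ℕ => (H ^ i) *ᵥ g) '' Set.Iio t)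

/-- The full Krylov space: span of `{H^i g : i ≥ 0}`. -/
noncomputable def KrylovFull {d : ℕ} (H : Matrix (Fin d) (Fin d) ℝ) (g : Fin d → ℝ) :
    Submodule ℝ (Fin d → ℝ) :=
  Submodule.span ℝ (Set.range fun i : ℕ => (H ^ i) *ᵥ g)

/-- `lam` is a `g`-relevant eigenvalue of `H`: `g` is not orthogonal to `ker (H - lam I)`. -/
def gRelevant {d : ℕ} (H : Matrix (Fin d) (Fin d) ℝ) (g : Fin d → ℝ) (lam : ℝ) : Prop :=
  ∃ v : Fin d → ℝ, H *ᵥ v = lam • v ∧ v ⬝ᵥ g ≠ 0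

/-- The Euclidean norm of a vector. -/
noncomputable def vnorm {d : ℕ} (x : Fin d → ℝ) : ℝ := Real.sqrt (x ⬝ᵥ x)

lemma pow_mulVec_eig {d : ℕ} {H : Matrix (Fin d) (Fin d) ℝ} {v : Fin d → ℝ} {μ : ℝ}
    (hv : H *ᵥ v = μ • v) (n : ℕ) : (H ^ n) *ᵥ v = μ ^ n • v := by
  induction n with
  | zero => simp
  | succ n ih => rw [pow_succ, ← mulVec_mulVec, hv, mulVec_smul, ih, smul_smul, ← pow_succ']

lemma aeval_mulVec_eig {d : ℕ} {H : Matrix (Fin d) (Fin d) ℝ} {v : Fin d → ℝ} {μ : ℝ}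
    (hv : H *ᵥ v = μ • v) (p : Polynomial ℝ) : (aeval H p) *ᵥ v = p.eval μ • v := by
  induction p using Polynomial.induction_on' with
  | add p q hp hq => rw [map_add, add_mulVec, hp, hq, eval_add, add_smul]
  | monomial n a =>
      rw [aeval_monomial, Algebra.algebraMap_eq_smul_one, smul_mul_assoc, one_mul,
        smul_mulVec, pow_mulVec_eig hv, eval_monomial, smul_smul]

lemma aeval_mulVec_mem {d : ℕ} (H : Matrix (Fin d) (Fin d) ℝ) (g : Fin d → ℝ)
    (p : Polynomial ℝ) : (aeval H p) *ᵥ g ∈ KrylovFull H g := by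
  induction p using Polynomial.induction_on' with
  | add p q hp hq => rw [map_add, add_mulVec]; exact add_mem hp hq
  | monomial n a =>
      rw [aeval_monomial, Algebra.algebraMap_eq_smul_one, smul_mul_assoc, one_mul,
        smul_mulVec]
      exact Submodule.smul_mem _ _ (Submodule.subset_span ⟨n, rfl⟩)

lemma mulVec_sum' {d : ℕ} (M : Matrix (Fin d) (Fin d) ℝ) (f : Fin d → (Fin d → ℝ)) :
    M *ᵥ (∑ j, f j) = ∑ j, M *ᵥ f j :=
  map_sum M.mulVecLin f Finset.univ

/-- If every eigenvalue of `H` is `g`-relevant, then `H` is positive semidefinite iff the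
curvature is nonnegative on the full Krylov space. -/
theorem posSemidef_iff_krylov_nonneg {d : ℕ} (H : Matrix (Fin d) (Fin d) ℝ)
    (hH : H.IsSymm) (g : Fin d → ℝ) (hg : g ≠ 0)
    (hrel : ∀ lam : ℝ, (∃ v : Fin d → ℝ, v ≠ 0 ∧ H *ᵥ v = lam • v) → gRelevant H g lam) :
    H.PosSemidef ↔ ∀ z ∈ KrylovFull H g, 0 ≤ z ⬝ᵥ (H *ᵥ z) := by
  classical
  have hA : H.IsHermitian := by
    rw [Matrix.IsHermitian, Matrix.conjTranspose_eq_transpose_of_trivial]; exact hH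
  constructor
  · intro hpsd z _
    simpa using hpsd.dotProduct_mulVec_nonneg z
  · intro hK
    refine hA.posSemidef_iff_eigenvalues_nonneg.mpr fun i => ?_
    set lam : Fin d → ℝ := hA.eigenvalues with hlam
    set u : Fin d → (Fin d → ℝ) := fun j => (hA.eigenvectorBasis j : Fin d → ℝ) with hudef
    have hu : ∀ j, H *ᵥ u j = lam j • u j := fun j => hA.mulVec_eigenvectorBasis j
    set μ : ℝ := lam i with hμ
    by_contra hneg
    push_neg at hneg
    obtain ⟨w, hw, hwg⟩ := hrel μ ⟨u i, fun h => hA.eigenvectorBasis.orthonormal.ne_zero i (by simpa [u] using h), hu i⟩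
    -- orthogonality: w ⬝ᵥ u j = 0 when lam j ≠ μ
    have hsym : ∀ x y : Fin d → ℝ, x ⬝ᵥ (H *ᵥ y) = (H *ᵥ x) ⬝ᵥ y := by
      intro x y
      rw [dotProduct_mulVec]
      nth_rewrite 1 [← hH]
      rw [vecMul_transpose]
    have horth : ∀ j, lam j ≠ μ → w ⬝ᵥ u j = 0 := by
      intro j hj
      have h1 : μ * (w ⬝ᵥ u j) = lam j * (w ⬝ᵥ u j) := by
        calc μ * (w ⬝ᵥ u j) = (μ • w) ⬝ᵥ u j := by rw [smul_dotProduct]; rfl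
        _ = (H *ᵥ w) ⬝ᵥ u j := by rw [hw]
        _ = w ⬝ᵥ (H *ᵥ u j) := (hsym w (u j)).symm
        _ = lam j * (w ⬝ᵥ u j) := by rw [hu j, dotProduct_smul]; rfl
      have := sub_eq_zero.mpr h1.symm
      rw [← sub_mul] at this
      rcases mul_eq_zero.mp this with h | h
      · exact absurd (sub_eq_zero.mp h) hj
      · exact h
    -- Lagrange polynomial
    set S : Finset ℝ := Finset.image lam Finset.univ with hS
    have hμS : μ ∈ S := Finset.mem_image_of_mem _ (Finset.mem_univ i)
    set p : Polynomial ℝ := Lagrange.basis S id μ with hpdef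
    have hp1 : p.eval μ = 1 := Lagrange.eval_basis_self (Set.injOn_id _) hμS
    have hp0 : ∀ j, lam j ≠ μ → p.eval (lam j) = 0 := fun j hj =>
      Lagrange.eval_basis_of_ne (v := id) (Ne.symm hj) (Finset.mem_image_of_mem _ (Finset.mem_univ j))
    -- coefficients
    set c : Fin d → ℝ := fun j => (inner ℝ (hA.eigenvectorBasis j) (WithLp.toLp 2 g : EuclideanSpace ℝ (Fin d)) : ℝ)
      with hc
    have hgsum : ∑ j, c j • u j = g := by
      have := congrArg WithLp.ofLp (hA.eigenvectorBasis.sum_repr' (WithLp.toLp 2 g))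
      simpa [c, u, WithLp.ofLp_sum] using this
    set z : Fin d → ℝ := (aeval H p) *ᵥ g with hzdef
    have hzmem : z ∈ KrylovFull H g := aeval_mulVec_mem H g p
    have hz : z = ∑ j, (c j * p.eval (lam j)) • u j := by
      rw [hzdef, ← hgsum, mulVec_sum']
      refine Finset.sum_congr rfl fun j _ => ?_
      rw [mulVec_smul, aeval_mulVec_eig (hu j), smul_smul, mul_comm]
    have hHz : H *ᵥ z = μ • z := by
      rw [hz, mulVec_sum', Finset.smul_sum]
      refine Finset.sum_congr rfl fun j _ => ?_
      rw [mulVec_smul, hu j, smul_smul, smul_smul]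
      by_cases hj : lam j = μ
      · rw [hj]; ring_nf
      · rw [hp0 j hj]; ring_nf
    have hdotsum : ∀ (f : Fin d → (Fin d → ℝ)), w ⬝ᵥ (∑ j, f j) = ∑ j, w ⬝ᵥ f j := by
      intro f
      simp only [dotProduct, Finset.sum_apply, Finset.mul_sum]
      exact Finset.sum_comm
    have hwz : w ⬝ᵥ z = w ⬝ᵥ g := by
      rw [hz, ← hgsum, hdotsum, hdotsum]
      refine Finset.sum_congr rfl fun j _ => ?_
      by_cases hj : lam j = μ
      · rw [hj, hp1, mul_one]
      · rw [dotProduct_smul, dotProduct_smul, smul_eq_mul, smul_eq_mul, horth j hj,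
          mul_zero, mul_zero]
    have hzne : z ≠ 0 := by
      intro h
      rw [h, dotProduct_zero] at hwz
      exact hwg hwz.symm
    have hzz : 0 < z ⬝ᵥ z := by
      have h0 : z ⬝ᵥ z ≠ 0 := fun h => hzne (dotProduct_self_eq_zero.mp h)
      have h1 : 0 ≤ z ⬝ᵥ z := Finset.sum_nonneg fun k _ => mul_self_nonneg _
      exact lt_of_le_of_ne h1 (Ne.symm h0)
    have hKz := hK z hzmem
    rw [hHz, dotProduct_smul, smul_eq_mul] at hKz
    nlinarith [show μ < 0 from hneg]
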